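/- Let n ≥ 1 and G ∈ 𝒢_n. For k ∈ {0,…,2n+1}, let C(k) be the set of vertices of G at graph distance k from source. Then the sets C(0),…,C(2n+1) partition the vertex set, |C(k)| = 2^k for 0 ≤ k ≤ n, |C(k)| = 2^{2n+1−k} for n+1 ≤ k ≤ 2n+1, and target is the unique vertex of C(2n+1); in particular the distance from source to target is 2n+1. -/

import Mathlib

open Finset

noncomputable section

/-- Vertices of a complete binary tree of height `n`: a level `k ≤ n` and an index below `2^k`. -/
abbrev TV (n : ℕ) : Type := Σ k : Fin (n+1), Fin (2^(k : ℕ))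

/-- Adjacency in a complete binary tree: one vertex is the parent of the other. -/
def treeAdj (n : ℕ) (a b : TV n) : Prop :=
  ((a.1 : ℕ) + 1 = (b.1 : ℕ) ∧ (b.2 : ℕ) / 2 = (a.2 : ℕ)) ∨
  ((b.1 : ℕ) + 1 = (a.1 : ℕ) ∧ (a.2 : ℕ) / 2 = (b.2 : ℕ))

instance (n : ℕ) (a b : TV n) : Decidable (treeAdj n a b) := by
  unfold treeAdj; infer_instance

lemma treeAdj_symm (n : ℕ) : Symmetric (treeAdj n) := by
  intro a b h; unfold treeAdj at *; tauto

lemma treeAdj_irrefl (n : ℕ) (a : TV n) : ¬ treeAdj n a a := by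
  unfold treeAdj; omega

/-- Vertices of a welded-trees graph: disjoint union of the two trees. -/
abbrev WTV (n : ℕ) : Type := TV n ⊕ TV n

def wtRoot (n : ℕ) : TV n := ⟨⟨0, Nat.succ_pos n⟩, ⟨0, by norm_num⟩⟩

/-- The root of the left tree. -/
def wtSource (n : ℕ) : WTV n := Sum.inl (wtRoot n)

/-- The root of the right tree. -/
def wtTarget (n : ℕ) : WTV n := Sum.inr (wtRoot n)

instance (n : ℕ) : Inhabited (WTV n) := ⟨wtSource n⟩

/-- The index (among the `2^n` leaves of its tree) of a leaf. -/
def leafIdx {n : ℕ} (a : TV n) : Fin (2^n) := ⟨(a.2 : ℕ) % 2^n, Nat.mod_lt _ (by positivity)⟩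

/-- Adjacency in the welded trees graph determined by the welding data `W`
(`W i j = true` iff the `i`-th left leaf is welded to the `j`-th right leaf). -/
def weldedAdj (n : ℕ) (W : Fin (2^n) → Fin (2^n) → Bool) : WTV n → WTV n → Prop
  | Sum.inl a, Sum.inl b => treeAdj n a b
  | Sum.inr a, Sum.inr b => treeAdj n a b
  | Sum.inl a, Sum.inr b => (a.1 : ℕ) = n ∧ (b.1 : ℕ) = n ∧ W (leafIdx a) (leafIdx b) = true
  | Sum.inr b, Sum.inl a => (a.1 : ℕ) = n ∧ (b.1 : ℕ) = n ∧ W (leafIdx a) (leafIdx b) = true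

/-- The welded trees graph determined by the welding data `W`. -/
def weldedGraph (n : ℕ) (W : Fin (2^n) → Fin (2^n) → Bool) : SimpleGraph (WTV n) where
  Adj := weldedAdj n W
  symm := by
    constructor
    rintro (a|a) (b|b) h
    · exact treeAdj_symm n h
    · exact h
    · exact h
    · exact treeAdj_symm n h
  loopless := by
    constructor
    rintro (a|a) h
    · exact treeAdj_irrefl n a h
    · exact treeAdj_irrefl n a h

instance (n : ℕ) (W : Fin (2^n) → Fin (2^n) → Bool) : DecidableRel (weldedGraph n W).Adj := by
  rintro (a|a) (b|b)
  · exact inferInstanceAs (Decidable (treeAdj n a b))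
  · exact inferInstanceAs (Decidable ((a.1 : ℕ) = n ∧ (b.1 : ℕ) = n ∧ W (leafIdx a) (leafIdx b) = true))
  · exact inferInstanceAs (Decidable ((b.1 : ℕ) = n ∧ (a.1 : ℕ) = n ∧ W (leafIdx b) (leafIdx a) = true))
  · exact inferInstanceAs (Decidable (treeAdj n a b))

/-- The index of the column of a vertex: its distance to `source`. -/
def colIdx (n : ℕ) (W : Fin (2^n) → Fin (2^n) → Bool) (v : WTV n) : ℕ :=
  (weldedGraph n W).dist (wtSource n) v

/-- The `k`-th column: vertices at distance `k` from `source`. -/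
def column (n : ℕ) (W : Fin (2^n) → Fin (2^n) → Bool) (k : ℕ) : Set (WTV n) :=
  {v | colIdx n W v = k}

/-- The bipartite graph on the leaves of the two trees given by the welding edges. -/
def weldGraphLeaves (n : ℕ) (W : Fin (2^n) → Fin (2^n) → Bool) :
    SimpleGraph (Fin (2^n) ⊕ Fin (2^n)) where
  Adj x y := (∃ i j, x = Sum.inl i ∧ y = Sum.inr j ∧ W i j = true) ∨
             (∃ i j, x = Sum.inr j ∧ y = Sum.inl i ∧ W i j = true)
  symm := by
    constructor
    rintro x y (⟨i, j, hx, hy, h⟩ | ⟨i, j, hx, hy, h⟩)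
    · exact Or.inr ⟨i, j, hy, hx, h⟩
    · exact Or.inl ⟨i, j, hy, hx, h⟩
  loopless := by
    constructor
    rintro x (⟨i, j, hx, hy, h⟩ | ⟨i, j, hx, hy, h⟩) <;> subst hx <;> simp_all

/-- `W` is a valid welding datum: every leaf is welded to exactly two leaves of the other
tree, and the welding edges form a single cycle (equivalently, the 2-regular bipartite
welding graph on the `2^{n+1}` leaves is connected). -/
def IsWeldedData (n : ℕ) (W : Fin (2^n) → Fin (2^n) → Bool) : Prop :=
  (∀ i : Fin (2^n), (univ.filter (fun j => W i j = true)).card = 2) ∧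
  (∀ j : Fin (2^n), (univ.filter (fun i => W i j = true)).card = 2) ∧
  (weldGraphLeaves n W).Connected

end

noncomputable section WTAux

open SimpleGraph

variable {n : ℕ}

/-- The level of a vertex: depth in left tree, `2n+1 -` depth in right tree. -/
def lvl (n : ℕ) : WTV n → ℕ
  | Sum.inl a => a.1
  | Sum.inr a => 2*n+1 - a.1

lemma lvl_step (W : Fin (2^n) → Fin (2^n) → Bool) {u v : WTV n}
    (h : (weldedGraph n W).Adj u v) :
    lvl n v = lvl n u + 1 ∨ lvl n u = lvl n v + 1 := by
  match u, v with
  | Sum.inl a, Sum.inl b =>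
      have ha := a.1.isLt; have hb := b.1.isLt
      rcases h with ⟨h1, _⟩ | ⟨h1, _⟩ <;> simp only [lvl] <;> omega
  | Sum.inr a, Sum.inr b =>
      have ha := a.1.isLt; have hb := b.1.isLt
      rcases h with ⟨h1, _⟩ | ⟨h1, _⟩ <;> simp only [lvl] <;> omega
  | Sum.inl a, Sum.inr b =>
      obtain ⟨h1, h2, _⟩ := h; simp only [lvl]; omega
  | Sum.inr b, Sum.inl a =>
      obtain ⟨h1, h2, _⟩ := h; simp only [lvl]; omega

lemma lvl_le_walk (W : Fin (2^n) → Fin (2^n) → Bool) {u v : WTV n}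
    (p : (weldedGraph n W).Walk u v) : lvl n v ≤ lvl n u + p.length := by
  induction p with
  | nil => simp
  | cons h p ih =>
      have := lvl_step W h
      simp only [Walk.length_cons]
      omega

lemma reach_inl (W : Fin (2^n) → Fin (2^n) → Bool) (a : TV n) :
    ∃ p : (weldedGraph n W).Walk (wtSource n) (Sum.inl a), p.length = (a.1 : ℕ) := by
  suffices h : ∀ k (a : TV n), (a.1 : ℕ) = k →
      ∃ p : (weldedGraph n W).Walk (wtSource n) (Sum.inl a), p.length = k by
    obtain ⟨p, hp⟩ := h _ a rfl; exact ⟨p, hp⟩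
  intro k
  induction k with
  | zero =>
      rintro ⟨⟨l, hl⟩, ⟨j, hj⟩⟩ h
      simp only at h
      subst h
      norm_num at hj
      subst hj
      exact ⟨Walk.nil, rfl⟩
  | succ k ih =>
      intro a h
      have hlt : k < n + 1 := by have := a.1.isLt; omega
      have h2 : (a.2 : ℕ) < 2 ^ (k + 1) :=
        lt_of_lt_of_le a.2.isLt (le_of_eq (congrArg (2 ^ ·) h))
      have hdiv : (a.2 : ℕ) / 2 < 2 ^ k := by rw [pow_succ] at h2; omega
      set pa : TV n := ⟨⟨k, hlt⟩, ⟨(a.2 : ℕ) / 2, hdiv⟩⟩ with hpa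
      have hadj : (weldedGraph n W).Adj (Sum.inl pa) (Sum.inl a) :=
        Or.inl ⟨by simp [hpa, h], rfl⟩
      obtain ⟨p, hp⟩ := ih pa rfl
      exact ⟨p.concat hadj, by simp [Walk.length_concat, hp]⟩

lemma reach_leaf (W : Fin (2^n) → Fin (2^n) → Bool) :
    ∀ d (a : TV n), n - (a.1 : ℕ) = d →
      ∃ (b : TV n) (p : (weldedGraph n W).Walk (Sum.inr a) (Sum.inr b)),
        (b.1 : ℕ) = n ∧ p.length = d := by
  intro d
  induction d with
  | zero =>
      intro a h
      have := a.1.isLt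
      exact ⟨a, Walk.nil, by omega, rfl⟩
  | succ d ih =>
      intro a h
      have hlt : (a.1 : ℕ) + 1 < n + 1 := by omega
      have h2 : 2 * (a.2 : ℕ) < 2 ^ ((a.1 : ℕ) + 1) := by
        have := a.2.isLt; rw [pow_succ]; omega
      set c : TV n := ⟨⟨(a.1 : ℕ) + 1, hlt⟩, ⟨2 * (a.2 : ℕ), h2⟩⟩ with hc
      have hadj : (weldedGraph n W).Adj (Sum.inr a) (Sum.inr c) :=
        Or.inl ⟨rfl, by show 2 * (a.2 : ℕ) / 2 = (a.2 : ℕ); omega⟩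
      obtain ⟨b, p, hb, hp⟩ := ih c (by simp [hc]; omega)
      exact ⟨b, Walk.cons hadj p, hb, by simp [hp]⟩

lemma reach_inr (W : Fin (2^n) → Fin (2^n) → Bool) (hW : IsWeldedData n W) (a : TV n) :
    ∃ p : (weldedGraph n W).Walk (wtSource n) (Sum.inr a), p.length = 2*n+1 - (a.1 : ℕ) := by
  obtain ⟨b, q, hb, hq⟩ := reach_leaf W (n - (a.1 : ℕ)) a rfl
  have hcard := hW.2.1 (leafIdx b)
  have hne : (Finset.univ.filter (fun i => W i (leafIdx b) = true)).Nonempty := by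
    rw [← Finset.card_pos, hcard]; norm_num
  obtain ⟨i, hi⟩ := hne
  rw [Finset.mem_filter] at hi
  have hi' : W i (leafIdx b) = true := hi.2
  set la : TV n := ⟨⟨n, n.lt_succ_self⟩, i⟩ with hla
  have hleaf : leafIdx la = i := by
    simp only [leafIdx, hla]
    exact Fin.ext (Nat.mod_eq_of_lt i.isLt)
  have hadj : (weldedGraph n W).Adj (Sum.inl la) (Sum.inr b) := by
    refine ⟨rfl, hb, ?_⟩; rw [hleaf]; exact hi'
  obtain ⟨pl, hpl⟩ := reach_inl W la
  refine ⟨pl.append (Walk.cons hadj q.reverse), ?_⟩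
  have hla1 : (la.1 : ℕ) = n := rfl
  have := a.1.isLt
  simp only [Walk.length_append, Walk.length_cons, Walk.length_reverse, hpl, hla1, hq]
  omega

lemma colIdx_eq (W : Fin (2^n) → Fin (2^n) → Bool) (hW : IsWeldedData n W) (v : WTV n) :
    colIdx n W v = lvl n v := by
  obtain ⟨p, hp⟩ : ∃ p : (weldedGraph n W).Walk (wtSource n) v, p.length = lvl n v := by
    match v with
    | Sum.inl a => exact reach_inl W a
    | Sum.inr a => exact reach_inr W hW a
  have hub : (weldedGraph n W).dist (wtSource n) v ≤ lvl n v := hp ▸ SimpleGraph.dist_le p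
  have hr : (weldedGraph n W).Reachable (wtSource n) v := ⟨p⟩
  obtain ⟨q, hq⟩ := hr.exists_walk_length_eq_dist
  have hlb := lvl_le_walk W q
  have hs : lvl n (wtSource n) = 0 := rfl
  unfold colIdx
  omega

lemma ncard_lvl_set (k : ℕ) (hk : k ≤ n) :
    {a : TV n | (a.1 : ℕ) = k}.ncard = 2 ^ k := by
  have hkn : k < n + 1 := by omega
  have e : {a : TV n // (a.1 : ℕ) = k} ≃ Fin (2 ^ k) :=
    { toFun := fun x => ⟨(x.1.2 : ℕ), lt_of_lt_of_le x.1.2.isLt (le_of_eq (congrArg (2 ^ ·) x.2))⟩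
      invFun := fun i => ⟨⟨⟨k, hkn⟩, ⟨i, i.isLt⟩⟩, rfl⟩
      left_inv := by
        rintro ⟨⟨⟨l, hl⟩, ⟨j, hj⟩⟩, h⟩
        simp only at h
        subst h
        rfl
      right_inv := fun i => rfl }
  rw [← Nat.card_coe_set_eq]
  exact (Nat.card_congr e).trans (by rw [Nat.card_eq_fintype_card, Fintype.card_fin])

lemma col_left (k : ℕ) (hk : k ≤ n) :
    {v : WTV n | lvl n v = k} = Sum.inl '' {a : TV n | (a.1 : ℕ) = k} := by
  ext v
  match v with
  | Sum.inl a => simp [lvl, Set.mem_image]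
  | Sum.inr a =>
      have := a.1.isLt
      simp only [Set.mem_setOf_eq, lvl, Set.mem_image]
      constructor
      · intro h; omega
      · rintro ⟨x, _, hx⟩; exact absurd hx (by simp)

lemma col_right (k : ℕ) (hk1 : n + 1 ≤ k) (hk2 : k ≤ 2*n+1) :
    {v : WTV n | lvl n v = k} = Sum.inr '' {a : TV n | (a.1 : ℕ) = 2*n+1-k} := by
  ext v
  match v with
  | Sum.inl a =>
      have := a.1.isLt
      simp only [Set.mem_setOf_eq, lvl, Set.mem_image]
      constructor
      · intro h; omega
      · rintro ⟨x, _, hx⟩; exact absurd hx (by simp)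
  | Sum.inr a =>
      have := a.1.isLt
      simp only [Set.mem_setOf_eq, lvl, Set.mem_image, Sum.inr.injEq]
      constructor
      · intro h; exact ⟨a, by omega, rfl⟩
      · rintro ⟨x, hx, rfl⟩; omega

lemma column_eq (W : Fin (2^n) → Fin (2^n) → Bool) (hW : IsWeldedData n W) (k : ℕ) :
    column n W k = {v : WTV n | lvl n v = k} := by
  ext v
  simp only [column, Set.mem_setOf_eq, colIdx_eq W hW]

lemma lvl_le (v : WTV n) : lvl n v ≤ 2*n+1 := by
  match v with
  | Sum.inl a => have := a.1.isLt; simp only [lvl]; omega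
  | Sum.inr a => simp only [lvl]; omega

end WTAux

/-- For `n ≥ 1` and `G ∈ 𝒢_n`, the columns `C(0), …, C(2n+1)` partition
the vertex set, `|C(k)| = 2^k` for `0 ≤ k ≤ n`, `|C(k)| = 2^{2n+1-k}` for
`n+1 ≤ k ≤ 2n+1`, and `target` is the unique vertex of `C(2n+1)`; in particular the
distance from `source` to `target` is `2n+1`. -/
theorem welded_trees_columns (n : ℕ) (hn : 1 ≤ n)
    (W : Fin (2^n) → Fin (2^n) → Bool) (hW : IsWeldedData n W) :
    (∀ v : WTV n, ∃! k : ℕ, k ≤ 2*n+1 ∧ v ∈ column n W k) ∧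
    (∀ k : ℕ, k ≤ n → (column n W k).ncard = 2^k) ∧
    (∀ k : ℕ, n+1 ≤ k → k ≤ 2*n+1 → (column n W k).ncard = 2^(2*n+1-k)) ∧
    column n W (2*n+1) = {wtTarget n} ∧
    (weldedGraph n W).dist (wtSource n) (wtTarget n) = 2*n+1 := by
  have key := colIdx_eq W hW
  refine ⟨?_, ?_, ?_, ?_, ?_⟩
  · intro v
    refine ⟨lvl n v, ⟨lvl_le v, key v⟩, ?_⟩
    rintro y ⟨-, hy⟩
    have h : colIdx n W v = y := hy
    rw [key v] at h
    exact h.symm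
  · intro k hk
    rw [column_eq W hW, col_left k hk,
        Set.ncard_image_of_injective _ Sum.inl_injective, ncard_lvl_set k hk]
  · intro k hk1 hk2
    rw [column_eq W hW, col_right k hk1 hk2,
        Set.ncard_image_of_injective _ Sum.inr_injective,
        ncard_lvl_set _ (by omega)]
  · rw [column_eq W hW, col_right (2*n+1) (by omega) le_rfl]
    have h0 : {a : TV n | (a.1 : ℕ) = 2*n+1-(2*n+1)} = {wtRoot n} := by
      ext ⟨⟨l, hl⟩, ⟨j, hj⟩⟩
      simp only [Set.mem_setOf_eq, Set.mem_singleton_iff, Nat.sub_self]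
      constructor
      · intro h
        subst h
        norm_num at hj
        subst hj
        rfl
      · intro h
        have h2 := congrArg (fun a : TV n => (a.1 : ℕ)) h
        simpa [wtRoot] using h2
    rw [h0]
    simp [wtTarget]
  · have h : (weldedGraph n W).dist (wtSource n) (wtTarget n) = colIdx n W (wtTarget n) := rfl
    rw [h, key]
    rfl
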